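/- Let F : ℝ → ℂ be a measurable function satisfying |F(k)| ≤ α·k^{-γ} for all k > c₀, where α > 0, c₀ > 0 and γ > 2 are constants. Then for every x₀ ∈ ℝ and every Δ with 0 < Δ ≤ 1/(2c₀), the series S(x₀,Δ) converges absolutely and satisfies |S(x₀,Δ)| ≤ (α·Δ^{γ−2}/(γ−1)) · Σ_{s=1}^∞ s·((s−1/2)^{1−γ} − (s+1/2)^{1−γ}); consequently S(x₀,Δ) → 0 as Δ → 0⁺. -/

import Mathlib

open Filter Finset MeasureTheory intervalIntegral

private lemma aux_diff_nonneg {γ : ℝ} (hγ : 2 < γ) {a b : ℝ} (ha : 0 < a) (hab : a ≤ b) :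
    b ^ (1 - γ) ≤ a ^ (1 - γ) :=
  Real.rpow_le_rpow_of_nonpos ha hab (by linarith)

private lemma aux_mvt {γ : ℝ} (hγ : 2 < γ) {a : ℝ} (ha : 0 < a) :
    a ^ (1 - γ) - (a + 1) ^ (1 - γ) ≤ (γ - 1) * a ^ (-γ) := by
  have hab : a ≤ a + 1 := by linarith
  have hmem : (0 : ℝ) ∉ Set.uIcc a (a + 1) := by
    rw [Set.uIcc_of_le hab]
    intro h
    exact absurd h.1 (by linarith)
  have hint : ∫ x in a..(a + 1), x ^ (-γ) = ((a+1) ^ (-γ+1) - a ^ (-γ+1)) / (-γ+1) :=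
    integral_rpow (Or.inr ⟨by intro h; have := neg_inj.mp h; linarith, hmem⟩)
  have hII : IntervalIntegrable (fun x : ℝ => x ^ (-γ)) volume a (a + 1) :=
    intervalIntegrable_rpow (Or.inr hmem)
  have hle : ∫ x in a..(a + 1), x ^ (-γ) ≤ ∫ _x in a..(a + 1), a ^ (-γ) := by
    apply intervalIntegral.integral_mono_on hab hII intervalIntegrable_const
    intro x hx
    exact Real.rpow_le_rpow_of_nonpos ha hx.1 (by linarith)
  have hconst : ∫ _x in a..(a + 1), a ^ (-γ) = a ^ (-γ) := by
    simp
  have heq : a ^ (1 - γ) - (a + 1) ^ (1 - γ) = (γ - 1) * ∫ x in a..(a + 1), x ^ (-γ) := by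
    rw [hint]
    have h1 : -γ + 1 = 1 - γ := by ring
    rw [h1]
    have hne : (1:ℝ) - γ ≠ 0 := by linarith
    field_simp
    ring
  rw [heq]
  have := mul_le_mul_of_nonneg_left (hle.trans_eq hconst) (by linarith : (0:ℝ) ≤ γ - 1)
  exact this

private lemma aux_g_nonneg {γ : ℝ} (hγ : 2 < γ) (n : ℕ) :
    0 ≤ ((n : ℝ) + 1) * ((((n : ℝ) + 1) - 1/2) ^ (1 - γ) - (((n : ℝ) + 1) + 1/2) ^ (1 - γ)) := by
  have hn : (0:ℝ) ≤ (n : ℝ) := n.cast_nonneg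
  have ha : (0:ℝ) < ((n : ℝ) + 1) - 1/2 := by linarith
  have := aux_diff_nonneg hγ ha (by linarith : ((n : ℝ) + 1) - 1/2 ≤ ((n : ℝ) + 1) + 1/2)
  have h1 : (0:ℝ) ≤ (n : ℝ) + 1 := by linarith
  nlinarith [this]

private lemma aux_summable {γ : ℝ} (hγ : 2 < γ) :
    Summable (fun n : ℕ => ((n : ℝ) + 1) *
      ((((n : ℝ) + 1) - 1/2) ^ (1 - γ) - (((n : ℝ) + 1) + 1/2) ^ (1 - γ))) := by
  have hsum : Summable (fun n : ℕ => ((n : ℝ) + 1) ^ (1 - γ)) := by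
    have h0 : Summable (fun n : ℕ => (n : ℝ) ^ (1 - γ)) :=
      Real.summable_nat_rpow.2 (by linarith)
    have h1 := (summable_nat_add_iff 1).2 h0
    refine h1.congr fun n => ?_
    push_cast
    ring_nf
  refine Summable.of_nonneg_of_le (aux_g_nonneg hγ)
    (fun n => ?_) ((hsum.mul_left ((γ - 1) * 2 ^ γ)))
  have hn : (0:ℝ) ≤ (n : ℝ) := n.cast_nonneg
  have ha : (0:ℝ) < ((n : ℝ) + 1) - 1/2 := by linarith
  have hs : (0:ℝ) < (n : ℝ) + 1 := by linarith
  have hmvt := aux_mvt hγ ha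
  have hplus : ((n : ℝ) + 1) - 1/2 + 1 = ((n : ℝ) + 1) + 1/2 := by ring
  rw [hplus] at hmvt
  have hhalf : ((n : ℝ) + 1) / 2 ≤ ((n : ℝ) + 1) - 1/2 := by linarith
  have hmono : (((n : ℝ) + 1) - 1/2) ^ (-γ) ≤ (((n : ℝ) + 1) / 2) ^ (-γ) :=
    Real.rpow_le_rpow_of_nonpos (by positivity) hhalf (by linarith)
  have hdivp : (((n : ℝ) + 1) / 2) ^ (-γ) = 2 ^ γ * ((n : ℝ) + 1) ^ (-γ) := by
    rw [Real.div_rpow hs.le (by norm_num : (0:ℝ) ≤ 2), div_eq_mul_inv,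
      ← Real.rpow_neg (by norm_num : (0:ℝ) ≤ 2), neg_neg]
    ring
  have hpow : ((n : ℝ) + 1) * ((n : ℝ) + 1) ^ (-γ) = ((n : ℝ) + 1) ^ (1 - γ) := by
    rw [show (1 : ℝ) - γ = 1 + -γ by ring, Real.rpow_add hs, Real.rpow_one]
  calc ((n : ℝ) + 1) * ((((n : ℝ) + 1) - 1/2) ^ (1 - γ) - (((n : ℝ) + 1) + 1/2) ^ (1 - γ))
      ≤ ((n : ℝ) + 1) * ((γ - 1) * (((n : ℝ) + 1) - 1/2) ^ (-γ)) := by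
        apply mul_le_mul_of_nonneg_left hmvt hs.le
    _ ≤ ((n : ℝ) + 1) * ((γ - 1) * (2 ^ γ * ((n : ℝ) + 1) ^ (-γ))) := by
        apply mul_le_mul_of_nonneg_left _ hs.le
        rw [← hdivp]
        exact mul_le_mul_of_nonneg_left hmono (by linarith)
    _ = (γ - 1) * 2 ^ γ * (((n : ℝ) + 1) * ((n : ℝ) + 1) ^ (-γ)) := by ring
    _ = (γ - 1) * 2 ^ γ * ((n : ℝ) + 1) ^ (1 - γ) := by rw [hpow]


/-- If a measurable `F : ℝ → ℂ` satisfies `|F(k)| ≤ α k^{-γ}` for `k > c₀`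
with `α, c₀ > 0` and `γ > 2`, then for every `x₀` and every `0 < Δ ≤ 1/(2c₀)` the series
`S(x₀,Δ)` converges absolutely, satisfies the stated bound, and `S(x₀,Δ) → 0` as
`Δ → 0⁺`. -/
theorem stmt_3 (F : ℝ → ℂ) (hF : Measurable F)
    (α c₀ γ : ℝ) (hα : 0 < α) (hc₀ : 0 < c₀) (hγ : 2 < γ)
    (hdecay : ∀ k : ℝ, c₀ < k → ‖F k‖ ≤ α * k ^ (-γ)) (x₀ : ℝ) :
    (∀ Δ : ℝ, 0 < Δ → Δ ≤ 1 / (2 * c₀) →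
      Summable (fun n : ℕ =>
        ‖((((n : ℝ) + 1) / Δ : ℝ) •
          ∫ k in ((((n : ℝ) + 1) - 1/2) / Δ)..((((n : ℝ) + 1) + 1/2) / Δ),
            F k * Complex.exp (Complex.I * (k : ℂ) * (x₀ : ℂ)))‖) ∧
      ‖(∑' n : ℕ,
          ((((n : ℝ) + 1) / Δ : ℝ) •
            ∫ k in ((((n : ℝ) + 1) - 1/2) / Δ)..((((n : ℝ) + 1) + 1/2) / Δ),
              F k * Complex.exp (Complex.I * (k : ℂ) * (x₀ : ℂ))))‖ ≤
        (α * Δ ^ (γ - 2) / (γ - 1)) *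
          ∑' n : ℕ, ((n : ℝ) + 1) *
            ((((n : ℝ) + 1) - 1/2) ^ (1 - γ) - (((n : ℝ) + 1) + 1/2) ^ (1 - γ))) ∧
    Tendsto (fun Δ : ℝ => ∑' n : ℕ,
        ((((n : ℝ) + 1) / Δ : ℝ) •
          ∫ k in ((((n : ℝ) + 1) - 1/2) / Δ)..((((n : ℝ) + 1) + 1/2) / Δ),
            F k * Complex.exp (Complex.I * (k : ℂ) * (x₀ : ℂ))))
      (nhdsWithin (0 : ℝ) (Set.Ioi 0)) (nhds 0) := by
  have hγ1 : (0:ℝ) < γ - 1 := by linarith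
  have hkey : ∀ Δ : ℝ, 0 < Δ → Δ ≤ 1 / (2 * c₀) → ∀ n : ℕ,
      ‖((((n : ℝ) + 1) / Δ : ℝ) •
          ∫ k in ((((n : ℝ) + 1) - 1/2) / Δ)..((((n : ℝ) + 1) + 1/2) / Δ),
            F k * Complex.exp (Complex.I * (k : ℂ) * (x₀ : ℂ)))‖ ≤
        (α * Δ ^ (γ - 2) / (γ - 1)) * (((n : ℝ) + 1) *
          ((((n : ℝ) + 1) - 1/2) ^ (1 - γ) - (((n : ℝ) + 1) + 1/2) ^ (1 - γ))) := by
    intro Δ hΔ hΔle n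
    have hn : (0:ℝ) ≤ (n : ℝ) := n.cast_nonneg
    have hs1 : (1:ℝ) ≤ (n : ℝ) + 1 := by linarith
    have ha' : (0:ℝ) < ((n : ℝ) + 1) - 1/2 := by linarith
    have hb' : (0:ℝ) < ((n : ℝ) + 1) + 1/2 := by linarith
    set s : ℝ := (n : ℝ) + 1 with hsdef
    set a : ℝ := (s - 1/2) / Δ with hadef
    set b : ℝ := (s + 1/2) / Δ with hbdef
    have ha : 0 < a := div_pos ha' hΔ
    have hab : a ≤ b := by
      rw [hadef, hbdef]
      apply div_le_div_of_nonneg_right (by linarith) hΔ.le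
    have hca : c₀ ≤ a := by
      rw [hadef, le_div_iff₀ hΔ]
      have h1 : Δ * (2 * c₀) ≤ 1 := by
        have := (le_div_iff₀ (by positivity : (0:ℝ) < 2 * c₀)).1 hΔle
        linarith
      nlinarith
    have hbound : ∀ t ∈ Set.Ioc a b,
        ‖F t * Complex.exp (Complex.I * (t : ℂ) * (x₀ : ℂ))‖ ≤ α * t ^ (-γ) := by
      intro t ht
      have hct : c₀ < t := lt_of_le_of_lt hca ht.1
      have he : ‖Complex.exp (Complex.I * (t : ℂ) * (x₀ : ℂ))‖ = 1 := by
        rw [Complex.norm_exp]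
        norm_num [Complex.mul_re, Complex.mul_im]
      rw [norm_mul, he, mul_one]
      exact hdecay t hct
    have hmem : (0 : ℝ) ∉ Set.uIcc a b := by
      rw [Set.uIcc_of_le hab]
      intro h
      exact absurd h.1 (by linarith)
    have hII : IntervalIntegrable (fun k : ℝ => α * k ^ (-γ)) volume a b :=
      (intervalIntegrable_rpow (Or.inr hmem)).const_mul α
    have hnormint : ‖∫ k in a..b, F k * Complex.exp (Complex.I * (k : ℂ) * (x₀ : ℂ))‖ ≤
        |∫ k in a..b, α * k ^ (-γ)| := by
      apply intervalIntegral.norm_integral_le_abs_of_norm_le _ hII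
      rw [Set.uIoc_of_le hab]
      exact (ae_restrict_iff' measurableSet_Ioc).2 (Filter.Eventually.of_forall hbound)
    have hval : ∫ k in a..b, α * k ^ (-γ) = α / (γ - 1) * (a ^ (1 - γ) - b ^ (1 - γ)) := by
      rw [intervalIntegral.integral_const_mul,
        integral_rpow (Or.inr ⟨by intro h; have := neg_inj.mp h; linarith, hmem⟩)]
      have h1 : -γ + 1 = 1 - γ := by ring
      rw [h1]
      have hne : (1:ℝ) - γ ≠ 0 := by linarith
      field_simp
      ring
    have hdiffnn : 0 ≤ a ^ (1 - γ) - b ^ (1 - γ) :=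
      sub_nonneg.2 (aux_diff_nonneg hγ ha hab)
    have hnonneg : 0 ≤ α / (γ - 1) * (a ^ (1 - γ) - b ^ (1 - γ)) :=
      mul_nonneg (div_nonneg hα.le hγ1.le) hdiffnn
    rw [hval, abs_of_nonneg hnonneg] at hnormint
    have hsΔ : 0 < s / Δ := div_pos (by linarith) hΔ
    rw [norm_smul, Real.norm_eq_abs, abs_of_pos hsΔ]
    refine (mul_le_mul_of_nonneg_left hnormint hsΔ.le).trans (le_of_eq ?_)
    have hdiv : ∀ x : ℝ, 0 < x → (x / Δ) ^ (1 - γ) = x ^ (1 - γ) * Δ ^ (γ - 1) := by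
      intro x hx
      rw [Real.div_rpow hx.le hΔ.le, div_eq_mul_inv, ← Real.rpow_neg hΔ.le, neg_sub]
    rw [hadef, hbdef, hdiv _ ha', hdiv _ hb']
    have hΔpow : Δ ^ (γ - 1) = Δ ^ (γ - 2) * Δ := by
      rw [← Real.rpow_add_one hΔ.ne' (γ - 2)]
      congr 1; ring
    rw [hΔpow]
    field_simp
  have hgsum := aux_summable hγ
  have hpart1 : ∀ Δ : ℝ, 0 < Δ → Δ ≤ 1 / (2 * c₀) →
      Summable (fun n : ℕ =>
        ‖((((n : ℝ) + 1) / Δ : ℝ) •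
          ∫ k in ((((n : ℝ) + 1) - 1/2) / Δ)..((((n : ℝ) + 1) + 1/2) / Δ),
            F k * Complex.exp (Complex.I * (k : ℂ) * (x₀ : ℂ)))‖) ∧
      ‖(∑' n : ℕ,
          ((((n : ℝ) + 1) / Δ : ℝ) •
            ∫ k in ((((n : ℝ) + 1) - 1/2) / Δ)..((((n : ℝ) + 1) + 1/2) / Δ),
              F k * Complex.exp (Complex.I * (k : ℂ) * (x₀ : ℂ))))‖ ≤
        (α * Δ ^ (γ - 2) / (γ - 1)) *
          ∑' n : ℕ, ((n : ℝ) + 1) *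
            ((((n : ℝ) + 1) - 1/2) ^ (1 - γ) - (((n : ℝ) + 1) + 1/2) ^ (1 - γ)) := by
    intro Δ hΔ hΔle
    have hkeyΔ := hkey Δ hΔ hΔle
    have hsum1 : Summable (fun n : ℕ =>
        ‖((((n : ℝ) + 1) / Δ : ℝ) •
          ∫ k in ((((n : ℝ) + 1) - 1/2) / Δ)..((((n : ℝ) + 1) + 1/2) / Δ),
            F k * Complex.exp (Complex.I * (k : ℂ) * (x₀ : ℂ)))‖) :=
      Summable.of_nonneg_of_le (fun n => norm_nonneg _) hkeyΔ
        (hgsum.mul_left _)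
    refine ⟨hsum1, ?_⟩
    refine (norm_tsum_le_tsum_norm hsum1).trans ?_
    rw [← tsum_mul_left]
    exact Summable.tsum_le_tsum hkeyΔ hsum1 (hgsum.mul_left _)
  refine ⟨hpart1, ?_⟩
  have hT0 : 0 ≤ ∑' n : ℕ, ((n : ℝ) + 1) *
      ((((n : ℝ) + 1) - 1/2) ^ (1 - γ) - (((n : ℝ) + 1) + 1/2) ^ (1 - γ)) :=
    tsum_nonneg (aux_g_nonneg hγ)
  refine squeeze_zero_norm' (a := fun Δ : ℝ => α * Δ ^ (γ - 2) / (γ - 1) *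
    ∑' n : ℕ, ((n : ℝ) + 1) *
      ((((n : ℝ) + 1) - 1/2) ^ (1 - γ) - (((n : ℝ) + 1) + 1/2) ^ (1 - γ))) ?_ ?_
  · filter_upwards [Ioo_mem_nhdsGT (by positivity : (0:ℝ) < 1 / (2 * c₀))] with Δ hΔ
    exact (hpart1 Δ hΔ.1 hΔ.2.le).2
  · have h1 : Tendsto (fun Δ : ℝ => Δ ^ (γ - 2)) (nhdsWithin 0 (Set.Ioi 0)) (nhds 0) := by
      have h := (Real.continuousAt_rpow_const 0 (γ - 2) (Or.inr (by linarith))).tendsto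
      rw [Real.zero_rpow (ne_of_gt (by linarith : (0:ℝ) < γ - 2))] at h
      exact h.mono_left nhdsWithin_le_nhds
    have h2 := ((h1.const_mul α).div_const (γ - 1)).mul_const
      (∑' n : ℕ, ((n : ℝ) + 1) *
        ((((n : ℝ) + 1) - 1/2) ^ (1 - γ) - (((n : ℝ) + 1) + 1/2) ^ (1 - γ)))
    simpa using h2
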